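/- Let (X, ε) and (Y, η) be locally compact paracompact Hausdorff spaces with proper coarsely connected coarse structures and let π : Y → X be a continuous coarse equivalence. Let X +_f Z and Y +_g Z' be perspective compactifications such that π extends to a continuous map π+ψ : Y +_g Z' → X +_f Z. Let f* be the pullback of f with respect to π and id_Z. Then the map id+ψ : Y +_g Z' → Y +_{f*} Z is continuous. Moreover, if ψ is a homeomorphism then id+ψ is a homeomorphism, and if Z = Z' and ψ = id_Z then f* = g. -/

import Mathlib

namespace Paper

open Set Topology

/-! ### Coarse structures -/

/-- The inverse of a relation `e ⊆ X × X`. -/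
def invRel {X : Type*} (e : Set (X × X)) : Set (X × X) := {p | (p.2, p.1) ∈ e}

/-- The composition of relations: `compRel e e' = {(a,b) | ∃ c, (a,c) ∈ e ∧ (c,b) ∈ e'}`.
This is `e' ∘ e` in the paper's notation. -/
def compRel {X : Type*} (e e' : Set (X × X)) : Set (X × X) :=
  {p | ∃ c, (p.1, c) ∈ e ∧ (c, p.2) ∈ e'}

/-- A coarse structure on a set `X`. -/
def IsCoarseStructure {X : Type*} (ε : Set (Set (X × X))) : Prop :=
  Set.diagonal X ∈ ε ∧
  (∀ e ∈ ε, ∀ e' : Set (X × X), e' ⊆ e → e' ∈ ε) ∧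
  (∀ e ∈ ε, ∀ e' ∈ ε, e ∪ e' ∈ ε) ∧
  (∀ e ∈ ε, invRel e ∈ ε) ∧
  (∀ e ∈ ε, ∀ e' ∈ ε, compRel e e' ∈ ε)

/-- The coarse structure generated by a family `A` of subsets of `X × X`:
the intersection of all coarse structures containing `A`. -/
def genCoarse {X : Type*} (A : Set (Set (X × X))) : Set (Set (X × X)) :=
  ⋂₀ {ε | IsCoarseStructure ε ∧ A ⊆ ε}

/-- The `u`-neighbourhood `𝔅(B, u)` of a subset `B`. -/
def Bnh {X : Type*} (B : Set X) (u : Set (X × X)) : Set X := {x | ∃ y ∈ B, (x, y) ∈ u}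

/-- A subset `B` is bounded for the coarse structure `ε` if `B × B ∈ ε`. -/
def CBounded {X : Type*} (ε : Set (Set (X × X))) (B : Set X) : Prop := B ×ˢ B ∈ ε

/-- A map is bornologous if it sends entourages to entourages. -/
def Bornologous {X Y : Type*} (ε : Set (Set (X × X))) (ζ : Set (Set (Y × Y)))
    (f : X → Y) : Prop :=
  ∀ e ∈ ε, Prod.map f f '' e ∈ ζ

/-- A map is (coarsely) proper if preimages of bounded sets are bounded. -/
def CProper {X Y : Type*} (ε : Set (Set (X × X))) (ζ : Set (Set (Y × Y)))
    (f : X → Y) : Prop :=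
  ∀ B : Set Y, CBounded ζ B → CBounded ε (f ⁻¹' B)

/-- A coarse map is a proper bornologous map. -/
def CoarseMap {X Y : Type*} (ε : Set (Set (X × X))) (ζ : Set (Set (Y × Y)))
    (f : X → Y) : Prop :=
  Bornologous ε ζ f ∧ CProper ε ζ f

/-- Two maps `f g : S → X` are close if `{(f s, g s) | s ∈ S}` is an entourage. -/
def Close {S X : Type*} (ε : Set (Set (X × X))) (f g : S → X) : Prop :=
  Set.range (fun s => (f s, g s)) ∈ ε

/-- A coarse equivalence: a coarse map with a coarse quasi-inverse. -/
def CoarseEquiv {X Y : Type*} (ε : Set (Set (X × X))) (ζ : Set (Set (Y × Y)))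
    (f : X → Y) : Prop :=
  CoarseMap ε ζ f ∧
    ∃ g : Y → X, CoarseMap ζ ε g ∧ Close ζ (f ∘ g) id ∧ Close ε (g ∘ f) id

/-- The subspace coarse structure on `A ⊆ Y`. -/
def SubCoarse {Y : Type*} (ζ : Set (Set (Y × Y))) (A : Set Y) : Set (Set (↥A × ↥A)) :=
  {e | Prod.map (Subtype.val : A → Y) (Subtype.val : A → Y) '' e ∈ ζ}

/-- A coarse embedding: a coarse map which is a coarse equivalence onto its image with
the subspace coarse structure. -/
def CoarseEmbedding {X Y : Type*} (ε : Set (Set (X × X))) (ζ : Set (Set (Y × Y)))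
    (f : X → Y) : Prop :=
  CoarseMap ε ζ f ∧ CoarseEquiv ε (SubCoarse ζ (Set.range f)) (Set.rangeFactorization f)

/-- A coarse space is coarsely connected if every pair lies in some entourage. -/
def CoarselyConnected {X : Type*} (ε : Set (Set (X × X))) : Prop :=
  ∀ x y : X, ∃ e ∈ ε, (x, y) ∈ e

/-- `A` is quasi-dense if `𝔅(A, e) = X` for some entourage `e`. -/
def QuasiDense {X : Type*} (ε : Set (Set (X × X))) (A : Set X) : Prop :=
  ∃ e ∈ ε, Bnh A e = Set.univ

/-- A subset of a topological space is topologically bounded if its closure is compact. -/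
def TopBounded {X : Type*} [TopologicalSpace X] (B : Set X) : Prop := IsCompact (closure B)

/-- A coarse structure on a topological space is proper if it contains a neighbourhood of
the diagonal and every bounded set is topologically bounded. -/
def ProperCoarse {X : Type*} [TopologicalSpace X] (ε : Set (Set (X × X))) : Prop :=
  (∃ e ∈ ε, e ∈ nhdsSet (Set.diagonal X)) ∧ ∀ B : Set X, CBounded ε B → TopBounded B

/-! ### Artin–Wraith glueings -/

/-- An admissible map `f : Closed(X) → Closed(Y)`. -/
def Admissible {X Y : Type*} [TopologicalSpace X] [TopologicalSpace Y]
    (f : Set X → Set Y) : Prop :=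
  (∀ A : Set X, IsClosed A → IsClosed (f A)) ∧
  (∀ A B : Set X, IsClosed A → IsClosed B → f (A ∪ B) = f A ∪ f B) ∧
  f ∅ = ∅

/-- The closed sets of the Artin–Wraith glueing `X +_f Y`. -/
def AWClosed {X Y : Type*} [TopologicalSpace X] [TopologicalSpace Y]
    (f : Set X → Set Y) : Set (Set (X ⊕ Y)) :=
  {A | IsClosed (Sum.inl ⁻¹' A) ∧ IsClosed (Sum.inr ⁻¹' A) ∧
    Sum.inr '' f (Sum.inl ⁻¹' A) ⊆ A}

/-- The topology of the Artin–Wraith glueing `X +_f Y` on `X ⊕ Y`. (For admissible `f`,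
the closed sets of this topology are exactly the members of `AWClosed f`.) -/
def AWTop {X Y : Type*} [TopologicalSpace X] [TopologicalSpace Y]
    (f : Set X → Set Y) : TopologicalSpace (X ⊕ Y) :=
  TopologicalSpace.generateFrom (compl '' AWClosed f)

/-- `X +_f W` is a (Hausdorff) compactification of `X`: a compact Hausdorff Artin–Wraith
glueing in which `X` is dense. -/
def IsCompactification {X W : Type*} [TopologicalSpace X] [TopologicalSpace W]
    (f : Set X → Set W) : Prop :=
  Admissible f ∧
  @CompactSpace (X ⊕ W) (AWTop f) ∧
  @T2Space (X ⊕ W) (AWTop f) ∧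
  @Dense (X ⊕ W) (AWTop f) (Set.range Sum.inl)

/-- A relation `e ⊆ X × X` is proper if `𝔅(B,e)` and `𝔅(B,e⁻¹)` are topologically
bounded for every topologically bounded `B`. -/
def ProperRel {X : Type*} [TopologicalSpace X] (e : Set (X × X)) : Prop :=
  ∀ B : Set X, TopBounded B → TopBounded (Bnh B e) ∧ TopBounded (Bnh B (invRel e))

/-- `e` is a perspective subset of `X × X` with respect to the compactification `X +_f W`. -/
def PerspRel {X W : Type*} [TopologicalSpace X] [TopologicalSpace W]
    (f : Set X → Set W) (e : Set (X × X)) : Prop :=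
  ProperRel e ∧
  ∀ y : W, ∀ V : Set (X ⊕ W), IsOpen[AWTop f] V → Sum.inr y ∈ V →
    ∃ U : Set (X ⊕ W), IsOpen[AWTop f] U ∧ Sum.inr y ∈ U ∧ U ⊆ V ∧
      ∀ p ∈ e, Sum.inl p.1 ∈ U → Sum.inl p.2 ∈ V

/-- A perspective compactification of the coarse space `(X, ε)`. -/
def PerspCompactification {X W : Type*} [TopologicalSpace X] [TopologicalSpace W]
    (ε : Set (Set (X × X))) (f : Set X → Set W) : Prop :=
  IsCompactification f ∧ ∀ e ∈ ε, PerspRel f e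

/-- The pullback of `f : Closed(X) → Closed(W)` with respect to `π : Y → X` and
`ϖ : Z → W`. -/
def pullbackAW {X Y Z W : Type*} [TopologicalSpace X] [TopologicalSpace Z]
    (f : Set X → Set W) (π : Y → X) (ϖ : Z → W) (A : Set Y) : Set Z :=
  closure (ϖ ⁻¹' (f (closure (π '' A))))

/-! ### Group actions -/

/-- `φ : G → X → X` is an action by homeomorphisms. -/
def IsActionByHomeos {G X : Type*} [Group G] [TopologicalSpace X]
    (φ : G → X → X) : Prop :=
  (∀ g : G, Continuous (φ g)) ∧ (∀ x : X, φ 1 x = x) ∧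
    ∀ g h : G, ∀ x : X, φ (g * h) x = φ g (φ h x)

/-- A properly discontinuous action. -/
def ProperlyDisc {G X : Type*} [TopologicalSpace X] (φ : G → X → X) : Prop :=
  ∀ K : Set X, IsCompact K → {g : G | (φ g '' K ∩ K).Nonempty}.Finite

/-- A cocompact action. -/
def CocompactAct {G X : Type*} [TopologicalSpace X] (φ : G → X → X) : Prop :=
  ∃ K : Set X, IsCompact K ∧ (⋃ g : G, φ g '' K) = Set.univ

/-- The saturation `Sat(A) = {(φ(g,x), φ(g,x')) : g ∈ G, x, x' ∈ A}`. -/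
def Sat {G X : Type*} (φ : G → X → X) (A : Set X) : Set (X × X) :=
  {p | ∃ g : G, ∃ x ∈ A, ∃ x' ∈ A, p = (φ g x, φ g x')}

/-- The coarse structure `ε_φ` on `X` generated by the saturations of topologically
bounded sets. -/
def coarseOfAction {G X : Type*} [TopologicalSpace X] (φ : G → X → X) :
    Set (Set (X × X)) :=
  genCoarse {e | ∃ A : Set X, TopBounded A ∧ e = Sat φ A}

/-- The saturation for the left multiplication action of a group on itself. -/
def SatMul {G : Type*} [Group G] (U : Set G) : Set (G × G) :=
  {p | ∃ g : G, ∃ u ∈ U, ∃ u' ∈ U, p = (g * u, g * u')}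

/-- The coarse structure `ε_G` on the group `G`, generated by the saturations of
finite subsets under the left multiplication action. -/
def coarseGroup (G : Type*) [Group G] : Set (Set (G × G)) :=
  genCoarse {e | ∃ U : Set G, U.Finite ∧ e = SatMul U}

/-- The compactification `X +_f W` is group-theoretically perspective with respect to the
action `φ`. -/
def GTPerspective {G X W : Type*} [TopologicalSpace X] [TopologicalSpace W]
    (φ : G → X → X) (f : Set X → Set W) : Prop :=
  ∀ K : Set X, IsCompact K → ∀ y : W, ∀ U : Set (X ⊕ W),
    IsOpen[AWTop f] U → Sum.inr y ∈ U →
      ∃ V : Set (X ⊕ W), IsOpen[AWTop f] V ∧ Sum.inr y ∈ V ∧ V ⊆ U ∧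
        ∀ g : G, (∃ x ∈ K, Sum.inl (φ g x) ∈ V) → ∀ x ∈ K, Sum.inl (φ g x) ∈ U

/-! ### Rays and accessibility -/

/-- A family `Ψ` of rays in `X` based at `p`: each member is a pair `(A, γ)` of a closed
unbounded subset `A ⊆ [0,∞)` containing `0` and a map `γ : ℝ → X` (regarded on `A`) which
is injective on `A`, proper, and satisfies `γ 0 = p`. -/
def GoodRayFamily {X : Type*} [TopologicalSpace X] (p : X)
    (Ψ : Set (Set ℝ × (ℝ → X))) : Prop :=
  ∀ r ∈ Ψ, r.1 ⊆ Set.Ici (0 : ℝ) ∧ IsClosed r.1 ∧ ¬Bornology.IsBounded r.1 ∧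
    (0 : ℝ) ∈ r.1 ∧ r.2 0 = p ∧ Set.InjOn r.2 r.1 ∧
    ∀ B : Set X, TopBounded B → Bornology.IsBounded (r.1 ∩ r.2 ⁻¹' B)

/-- The compactification `X +_f W` is `Ψ`-accessible. -/
def AccessibleComp {X W : Type*} [TopologicalSpace X] [TopologicalSpace W]
    (f : Set X → Set W) (Ψ : Set (Set ℝ × (ℝ → X))) : Prop :=
  (∀ w : W, ∃ r ∈ Ψ, f (closure (r.2 '' r.1)) = {w}) ∧
  ∀ r ∈ Ψ, ∃ w : W, f (closure (r.2 '' r.1)) = {w}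



section Helpers

open TopologicalSpace

variable {X Z : Type*} [TopologicalSpace X] [TopologicalSpace Z]

lemma isClosedT_closure {α : Type*} (t : TopologicalSpace α) (s : Set α) :
    IsClosed[t] (@closure _ t s) := by letI := t; exact isClosed_closure

lemma subsetT_closure {α : Type*} (t : TopologicalSpace α) (s : Set α) :
    s ⊆ @closure _ t s := by letI := t; exact subset_closure

lemma closureT_minimal {α : Type*} {t : TopologicalSpace α} {s u : Set α}
    (h : s ⊆ u) (hu : IsClosed[t] u) : @closure _ t s ⊆ u :=
  by letI := t; exact closure_minimal h hu

lemma isClosedT_preimage {α β : Type*} {t1 : TopologicalSpace α} {t2 : TopologicalSpace β}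
    {f : α → β} (hf : Continuous[t1, t2] f) {s : Set β} (hs : IsClosed[t2] s) :
    IsClosed[t1] (f ⁻¹' s) := @IsClosed.preimage _ _ t1 t2 f hf s hs

lemma isCompactT_of_isClosed {α : Type*} {t : TopologicalSpace α} (hc : @CompactSpace α t)
    {s : Set α} (hs : IsClosed[t] s) : @IsCompact _ t s := @IsClosed.isCompact _ t s hc hs

lemma isCompactT_image {α β : Type*} {t1 : TopologicalSpace α} {t2 : TopologicalSpace β}
    {s : Set α} {f : α → β} (hs : @IsCompact _ t1 s) (hf : Continuous[t1, t2] f) :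
    @IsCompact _ t2 (f '' s) := @IsCompact.image _ _ t1 t2 s f hs hf

lemma isClosedT_of_isCompact {α : Type*} {t : TopologicalSpace α} (h2 : @T2Space α t)
    {s : Set α} (hs : @IsCompact _ t s) : IsClosed[t] s := @IsCompact.isClosed _ t h2 s hs

lemma imageT_closure_subset {α β : Type*} {t1 : TopologicalSpace α} {t2 : TopologicalSpace β}
    {f : α → β} {s : Set α} (hf : Continuous[t1, t2] f) :
    f '' @closure _ t1 s ⊆ @closure _ t2 (f '' s) :=
  @image_closure_subset_closure_image _ _ t1 t2 f s hf

lemma admissible_mono {f : Set X → Set Z} (hf : Admissible f) {A B : Set X}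
    (hA : IsClosed A) (hB : IsClosed B) (hAB : A ⊆ B) : f A ⊆ f B := by
  have h : f B = f A ∪ f B := by
    rw [← hf.2.1 A B hA hB, union_eq_self_of_subset_left hAB]
  rw [h]; exact subset_union_left

lemma awClosed_isClosed {f : Set X → Set Z} {A : Set (X ⊕ Z)} (hA : A ∈ AWClosed f) :
    IsClosed[AWTop f] A := by
  letI := AWTop f
  rw [← isOpen_compl_iff]
  exact TopologicalSpace.isOpen_generateFrom_of_mem ⟨A, hA, rfl⟩

lemma awClosed_union {f : Set X → Set Z} (hf : Admissible f) {A B : Set (X ⊕ Z)}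
    (hA : A ∈ AWClosed f) (hB : B ∈ AWClosed f) : A ∪ B ∈ AWClosed f := by
  obtain ⟨hA1, hA2, hA3⟩ := hA
  obtain ⟨hB1, hB2, hB3⟩ := hB
  refine ⟨by rw [preimage_union]; exact hA1.union hB1,
          by rw [preimage_union]; exact hA2.union hB2, ?_⟩
  rw [preimage_union, hf.2.1 _ _ hA1 hB1, image_union]
  exact union_subset (hA3.trans subset_union_left) (hB3.trans subset_union_right)

lemma awClosed_sInter {f : Set X → Set Z} (hf : Admissible f) {S : Set (Set (X ⊕ Z))}
    (hS : S ⊆ AWClosed f) : ⋂₀ S ∈ AWClosed f := by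
  have h1 : Sum.inl ⁻¹' ⋂₀ S = ⋂ A ∈ S, Sum.inl ⁻¹' A := by ext x; simp
  have h2 : Sum.inr ⁻¹' ⋂₀ S = ⋂ A ∈ S, Sum.inr ⁻¹' A := by ext x; simp
  have hc1 : IsClosed (Sum.inl ⁻¹' ⋂₀ S) := by
    rw [h1]; exact isClosed_biInter (fun A hA => (hS hA).1)
  refine ⟨hc1, by rw [h2]; exact isClosed_biInter (fun A hA => (hS hA).2.1), ?_⟩
  rintro _ ⟨w, hw, rfl⟩
  simp only [mem_sInter]
  intro A hA
  have hsub : f (Sum.inl ⁻¹' ⋂₀ S) ⊆ f (Sum.inl ⁻¹' A) :=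
    admissible_mono hf hc1 (hS hA).1 (preimage_mono (sInter_subset_of_mem hA))
  exact (hS hA).2.2 ⟨w, hsub hw, rfl⟩

lemma isClosed_iff_awClosed {f : Set X → Set Z} (hf : Admissible f) {A : Set (X ⊕ Z)} :
    IsClosed[AWTop f] A ↔ A ∈ AWClosed f := by
  refine ⟨fun hA => ?_, awClosed_isClosed⟩
  letI := AWTop f
  have hopen : IsOpen Aᶜ := hA.isOpen_compl
  have key : ∀ U : Set (X ⊕ Z), GenerateOpen (compl '' AWClosed f) U → Uᶜ ∈ AWClosed f := by
    intro U hU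
    induction hU with
    | basic s hs => obtain ⟨t, ht, rfl⟩ := hs; simpa using ht
    | univ =>
        rw [compl_univ]
        exact ⟨by simp, by simp, by simp [hf.2.2]⟩
    | inter s t _ _ ihs iht =>
        rw [compl_inter]
        exact awClosed_union hf ihs iht
    | sUnion S _ ih =>
        rw [compl_sUnion]
        exact awClosed_sInter hf (by rintro _ ⟨t, ht, rfl⟩; exact ih t ht)
  have := key Aᶜ hopen
  simpa using this

lemma awClosure_inl_image {f : Set X → Set Z} (hf : Admissible f) (S : Set X) :
    @closure _ (AWTop f) (Sum.inl '' S) =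
      Sum.inl '' closure S ∪ Sum.inr '' f (closure S) := by
  have hC : (Sum.inl '' closure S ∪ Sum.inr '' f (closure S) : Set (X ⊕ Z)) ∈ AWClosed f := by
    have e1 : Sum.inl ⁻¹' (Sum.inl '' closure S ∪ Sum.inr '' f (closure S) : Set (X ⊕ Z))
        = closure S := by ext x; simp
    have e2 : Sum.inr ⁻¹' (Sum.inl '' closure S ∪ Sum.inr '' f (closure S) : Set (X ⊕ Z))
        = f (closure S) := by ext z; simp
    refine ⟨by rw [e1]; exact isClosed_closure, by rw [e2]; exact hf.1 _ isClosed_closure, ?_⟩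
    rw [e1]; exact subset_union_right
  have hD : @closure _ (AWTop f) (Sum.inl '' S) ∈ AWClosed f :=
    (isClosed_iff_awClosed hf).1 (isClosedT_closure (AWTop f) _)
  have hsub : closure S ⊆ Sum.inl ⁻¹' (@closure _ (AWTop f) (Sum.inl '' S)) :=
    closure_minimal (fun y hy => subsetT_closure (AWTop f) _ (mem_image_of_mem _ hy)) hD.1
  apply Subset.antisymm
  · exact closureT_minimal
      (fun x hx => Or.inl (image_mono subset_closure hx)) (awClosed_isClosed hC)
  · rintro x (⟨y, hy, rfl⟩ | ⟨z, hz, rfl⟩)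
    · exact hsub hy
    · exact hD.2.2 ⟨z, admissible_mono hf isClosed_closure hD.1 hsub hz, rfl⟩

lemma continuous_inr_aw {f : Set X → Set Z} :
    Continuous[_, AWTop f] (Sum.inr : Z → X ⊕ Z) := by
  refine continuous_generateFrom_iff.mpr ?_
  rintro s ⟨A, hA, rfl⟩
  rw [preimage_compl]
  exact hA.2.1.isOpen_compl

lemma awClosed_inr_image {f : Set X → Set Z} (hf : Admissible f) {C : Set Z}
    (hC : IsClosed C) : (Sum.inr '' C : Set (X ⊕ Z)) ∈ AWClosed f := by
  have e1 : Sum.inl ⁻¹' (Sum.inr '' C : Set (X ⊕ Z)) = ∅ := by ext x; simp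
  have e2 : Sum.inr ⁻¹' (Sum.inr '' C : Set (X ⊕ Z)) = C := by ext z; simp
  exact ⟨by rw [e1]; exact isClosed_empty, by rw [e2]; exact hC,
    by rw [e1, hf.2.2]; simp⟩

lemma psi_continuous {X Y Z Z' : Type*} [TopologicalSpace X] [TopologicalSpace Y]
    [TopologicalSpace Z] [TopologicalSpace Z']
    {f : Set X → Set Z} {g : Set Y → Set Z'} (hf : Admissible f)
    {π : Y → X} {ψ : Z' → Z}
    (hext : Continuous[AWTop g, AWTop f] (Sum.map π ψ)) : Continuous ψ := by
  rw [continuous_iff_isClosed]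
  intro C hC
  have h1 : IsClosed[AWTop f] (Sum.inr '' C : Set (X ⊕ Z)) :=
    awClosed_isClosed (awClosed_inr_image hf hC)
  have h2 : IsClosed[AWTop g] (Sum.map π ψ ⁻¹' (Sum.inr '' C)) := isClosedT_preimage hext h1
  have h3 : IsClosed (Sum.inr ⁻¹' (Sum.map π ψ ⁻¹' (Sum.inr '' C)) : Set Z') :=
    isClosedT_preimage continuous_inr_aw h2
  have e : Sum.inr ⁻¹' (Sum.map π ψ ⁻¹' (Sum.inr '' C)) = ψ ⁻¹' C := by
    ext z; simp
  rwa [e] at h3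

lemma key_eq {X Y Z Z' : Type*} [TopologicalSpace X] [TopologicalSpace Y]
    [TopologicalSpace Z] [TopologicalSpace Z']
    {f : Set X → Set Z} {g : Set Y → Set Z'} (hf : Admissible f) (hg : Admissible g)
    (hcomp : @CompactSpace (Y ⊕ Z') (AWTop g)) (hT2 : @T2Space (X ⊕ Z) (AWTop f))
    {π : Y → X} {ψ : Z' → Z}
    (hext : Continuous[AWTop g, AWTop f] (Sum.map π ψ))
    {A : Set Y} (hA : IsClosed A) : ψ '' g A = f (closure (π '' A)) := by
  have himg : ∀ S : Set Y,
      Sum.map π ψ '' (Sum.inl '' S) = (Sum.inl '' (π '' S) : Set (X ⊕ Z)) := by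
    intro S; rw [← image_comp, ← image_comp]; rfl
  have hclg := awClosure_inl_image hg A
  rw [hA.closure_eq] at hclg
  have hclf := awClosure_inl_image hf (π '' A)
  apply Subset.antisymm
  · rintro _ ⟨w, hw, rfl⟩
    have h1 : (Sum.inr w : Y ⊕ Z') ∈ @closure _ (AWTop g) (Sum.inl '' A) := by
      rw [hclg]; exact Or.inr ⟨w, hw, rfl⟩
    have h2 : Sum.map π ψ (Sum.inr w) ∈
        @closure _ (AWTop f) (Sum.map π ψ '' (Sum.inl '' A)) :=
      imageT_closure_subset hext ⟨_, h1, rfl⟩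
    rw [himg, hclf, Sum.map_inr] at h2
    rcases h2 with ⟨y, _, hy⟩ | ⟨z, hz, hzz⟩
    · exact absurd hy (by simp)
    · rw [Sum.inr.injEq] at hzz
      rwa [← hzz]
  · intro z hz
    have hK : IsClosed[AWTop g] (@closure _ (AWTop g) (Sum.inl '' A)) :=
      isClosedT_closure (AWTop g) _
    have hKc : @IsCompact _ (AWTop g) (@closure _ (AWTop g) (Sum.inl '' A)) :=
      isCompactT_of_isClosed hcomp hK
    have hKi : @IsCompact _ (AWTop f)
        (Sum.map π ψ '' @closure _ (AWTop g) (Sum.inl '' A)) :=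
      isCompactT_image hKc hext
    have hKcl : IsClosed[AWTop f]
        (Sum.map π ψ '' @closure _ (AWTop g) (Sum.inl '' A)) :=
      isClosedT_of_isCompact hT2 hKi
    have hsub : @closure _ (AWTop f) (Sum.inl '' (π '' A)) ⊆
        Sum.map π ψ '' @closure _ (AWTop g) (Sum.inl '' A) := by
      refine closureT_minimal ?_ hKcl
      rw [← himg]
      exact image_mono (subsetT_closure (AWTop g) _)
    have hmem : (Sum.inr z : X ⊕ Z) ∈ @closure _ (AWTop f) (Sum.inl '' (π '' A)) := by
      rw [hclf]; exact Or.inr ⟨z, hz, rfl⟩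
    obtain ⟨q, hq, hqz⟩ := hsub hmem
    rw [hclg] at hq
    rcases hq with ⟨y, _, rfl⟩ | ⟨w, hw, rfl⟩
    · rw [Sum.map_inl] at hqz
      exact absurd hqz (by simp)
    · rw [Sum.map_inr, Sum.inr.injEq] at hqz
      exact ⟨w, hw, hqz⟩

end Helpers

/-- if the continuous coarse equivalence `π` extends to a continuous map
`π+ψ : Y +_g Z' → X +_f Z`, then `id+ψ : Y +_g Z' → Y +_{f*} Z` is continuous;
if `ψ` is a homeomorphism then so is `id+ψ`; and in the case `Z' = Z`, `ψ = id`,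
the pullback `f*` agrees with `g` on closed sets. -/
theorem stmt15 {X Y Z Z' : Type*} [TopologicalSpace X] [T2Space X] [LocallyCompactSpace X]
    [ParacompactSpace X] [TopologicalSpace Y] [T2Space Y] [LocallyCompactSpace Y]
    [ParacompactSpace Y] [TopologicalSpace Z] [TopologicalSpace Z']
    (ε : Set (Set (X × X))) (η : Set (Set (Y × Y)))
    (hε : IsCoarseStructure ε) (hεconn : CoarselyConnected ε) (hεprop : ProperCoarse ε)
    (hη : IsCoarseStructure η) (hηconn : CoarselyConnected η) (hηprop : ProperCoarse η)
    (π : Y → X) (hπc : Continuous π) (hπ : CoarseEquiv η ε π)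
    (f : Set X → Set Z) (g : Set Y → Set Z')
    (hf : PerspCompactification ε f) (hg : PerspCompactification η g)
    (ψ : Z' → Z)
    (hext : Continuous[AWTop g, AWTop f] (Sum.map π ψ)) :
    Continuous[AWTop g, AWTop (pullbackAW f π (id : Z → Z))]
      (Sum.map (id : Y → Y) ψ) ∧
    (IsHomeomorph ψ →
      @IsHomeomorph (Y ⊕ Z') (Y ⊕ Z) (AWTop g) (AWTop (pullbackAW f π (id : Z → Z)))
        (Sum.map (id : Y → Y) ψ)) ∧
    (∀ g' : Set Y → Set Z, PerspCompactification η g' →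
      Continuous[AWTop g', AWTop f] (Sum.map π (id : Z → Z)) →
      ∀ A : Set Y, IsClosed A → pullbackAW f π (id : Z → Z) A = g' A) := by
  have hfa : Admissible f := hf.1.1
  have hga : Admissible g := hg.1.1
  have hfT2 : @T2Space (X ⊕ Z) (AWTop f) := hf.1.2.2.1
  have hgC : @CompactSpace (Y ⊕ Z') (AWTop g) := hg.1.2.1
  have hψc : Continuous ψ := psi_continuous hfa hext
  have hpull : ∀ A : Set Y, pullbackAW f π (id : Z → Z) A = f (closure (π '' A)) := by
    intro A
    unfold pullbackAW
    rw [preimage_id, (hfa.1 _ isClosed_closure).closure_eq]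
  have keyA : ∀ A : Set Y, IsClosed A →
      ψ '' g A = pullbackAW f π (id : Z → Z) A := by
    intro A hA
    rw [hpull]
    exact key_eq hfa hga hgC hfT2 hext hA
  have preim : ∀ A ∈ AWClosed (pullbackAW f π (id : Z → Z)),
      Sum.map (id : Y → Y) ψ ⁻¹' A ∈ AWClosed g := by
    intro A hA
    have e1 : Sum.inl ⁻¹' (Sum.map (id : Y → Y) ψ ⁻¹' A) = Sum.inl ⁻¹' A := by
      ext y; simp
    have e2 : Sum.inr ⁻¹' (Sum.map (id : Y → Y) ψ ⁻¹' A) = ψ ⁻¹' (Sum.inr ⁻¹' A) := by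
      ext z; simp
    refine ⟨by rw [e1]; exact hA.1, by rw [e2]; exact hA.2.1.preimage hψc, ?_⟩
    rintro _ ⟨w, hw, rfl⟩
    rw [e1] at hw
    have h1 : ψ w ∈ pullbackAW f π (id : Z → Z) (Sum.inl ⁻¹' A) := by
      rw [← keyA _ hA.1]
      exact ⟨w, hw, rfl⟩
    have h2 := hA.2.2 ⟨ψ w, h1, rfl⟩
    simpa using h2
  have cont1 : Continuous[AWTop g, AWTop (pullbackAW f π (id : Z → Z))]
      (Sum.map (id : Y → Y) ψ) := by
    refine continuous_generateFrom_iff.mpr ?_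
    rintro s ⟨A, hA, rfl⟩
    rw [preimage_compl]
    exact (awClosed_isClosed (preim A hA)).isOpen_compl
  refine ⟨cont1, fun hψh => ?_, fun g' hg' hext' A hA => ?_⟩
  · obtain ⟨hmeo, hmeoeq⟩ := isHomeomorph_iff_exists_homeomorph.mp hψh
    have preim2 : ∀ A ∈ AWClosed g,
        Sum.map (id : Y → Y) hmeo.symm ⁻¹' A ∈ AWClosed (pullbackAW f π (id : Z → Z)) := by
      intro A hA
      have e1 : Sum.inl ⁻¹' (Sum.map (id : Y → Y) hmeo.symm ⁻¹' A) = Sum.inl ⁻¹' A := by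
        ext y; simp
      have e2 : Sum.inr ⁻¹' (Sum.map (id : Y → Y) hmeo.symm ⁻¹' A)
          = hmeo.symm ⁻¹' (Sum.inr ⁻¹' A) := by
        ext z; simp
      refine ⟨by rw [e1]; exact hA.1,
        by rw [e2]; exact hA.2.1.preimage hmeo.symm.continuous, ?_⟩
      rintro _ ⟨v, hv, rfl⟩
      rw [e1] at hv
      rw [← keyA _ hA.1] at hv
      obtain ⟨w, hw, rfl⟩ := hv
      have hsymm : hmeo.symm (ψ w) = w := by
        rw [← hmeoeq]; exact hmeo.symm_apply_apply w
      have h2 : (Sum.inr w : Y ⊕ Z') ∈ A := hA.2.2 ⟨w, hw, rfl⟩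
      simpa [hsymm] using h2
    have cont2 : Continuous[AWTop (pullbackAW f π (id : Z → Z)), AWTop g]
        (Sum.map (id : Y → Y) hmeo.symm) := by
      refine continuous_generateFrom_iff.mpr ?_
      rintro s ⟨A, hA, rfl⟩
      rw [preimage_compl]
      exact (awClosed_isClosed (preim2 A hA)).isOpen_compl
    refine (@isHomeomorph_iff_exists_inverse _ _ (AWTop g)
      (AWTop (pullbackAW f π (id : Z → Z))) _).mpr
      ⟨cont1, Sum.map (id : Y → Y) hmeo.symm, ?_, ?_, cont2⟩
    · intro a
      cases a with
      | inl y => rfl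
      | inr z =>
          simp only [Sum.map_inr]
          rw [← hmeoeq]
          simp
    · intro a
      cases a with
      | inl y => rfl
      | inr z =>
          simp only [Sum.map_inr]
          rw [← hmeoeq]
          simp
  · have hg'a : Admissible g' := hg'.1.1
    have hg'C : @CompactSpace (Y ⊕ Z) (AWTop g') := hg'.1.2.1
    have h := key_eq hfa hg'a hg'C hfT2 hext' hA
    rw [hpull, ← h, image_id]


end Paper
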